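/- The vector R_p = (0,0,0,0, (1-b_x^2)Δp, b_x^2 Δp - |B|^2/(4 pi), B_y, B_z)^T, with Δp = p_par - p_perp and b_x = B_x/|B|, is an eigenvector of the 8×8 CGL quasilinear matrix A with eigenvalue u_x (the pressure anisotropy wave). -/

import Mathlib

open Real

/-- The quasilinear coefficient matrix of the 1-D CGL equations in primitive variables. -/
noncomputable def cglA (ρ ux ppar pperp Bx By Bz : ℝ) : Matrix (Fin 8) (Fin 8) ℝ :=
  let B := Real.sqrt (Bx^2 + By^2 + Bz^2)
  let bx := Bx / B
  let bY := By / B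
  let bz := Bz / B
  let dp := ppar - pperp
  !![ux, ρ, 0, 0, 0, 0, 0, 0;
     0, ux, 0, 0, bx^2/ρ, (1 - bx^2)/ρ,
       By/(4*π*ρ) - 2*bx^2*bY*dp/(ρ*B), Bz/(4*π*ρ) - 2*bx^2*bz*dp/(ρ*B);
     0, 0, ux, 0, bx*bY/ρ, -(bx*bY)/ρ,
       bx*(1 - 2*bY^2)*dp/(ρ*B) - Bx/(4*π*ρ), -(2*bx*bY*bz*dp)/(ρ*B);
     0, 0, 0, ux, bx*bz/ρ, -(bx*bz)/ρ,
       -(2*bx*bY*bz*dp)/(ρ*B), bx*(1 - 2*bz^2)*dp/(ρ*B) - Bx/(4*π*ρ);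
     0, ppar*(1 + 2*bx^2), 2*ppar*bx*bY, 2*ppar*bx*bz, ux, 0, 0, 0;
     0, pperp*(2 - bx^2), -(pperp*bx*bY), -(pperp*bx*bz), 0, ux, 0, 0;
     0, By, -Bx, 0, 0, 0, ux, 0;
     0, Bz, 0, -Bx, 0, 0, 0, ux]

/-- The pressure-anisotropy wave eigenvector of the CGL matrix, with eigenvalue `u_x`. -/
theorem pressure_anisotropy_eigenvector (ρ ux ppar pperp Bx By Bz : ℝ)
    (hρ : 0 < ρ) (hB : 0 < Real.sqrt (Bx^2 + By^2 + Bz^2)) :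
    (cglA ρ ux ppar pperp Bx By Bz).mulVec
      ![0, 0, 0, 0,
        (1 - (Bx / Real.sqrt (Bx^2 + By^2 + Bz^2))^2) * (ppar - pperp),
        (Bx / Real.sqrt (Bx^2 + By^2 + Bz^2))^2 * (ppar - pperp)
          - (Bx^2 + By^2 + Bz^2) / (4*π),
        By, Bz]
    = ux • ![0, 0, 0, 0,
        (1 - (Bx / Real.sqrt (Bx^2 + By^2 + Bz^2))^2) * (ppar - pperp),
        (Bx / Real.sqrt (Bx^2 + By^2 + Bz^2))^2 * (ppar - pperp)
          - (Bx^2 + By^2 + Bz^2) / (4*π),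
        By, Bz] := by
  have hs : Real.sqrt (Bx^2 + By^2 + Bz^2) ^ 2 = Bx^2 + By^2 + Bz^2 :=
    Real.sq_sqrt (by positivity)
  set s := Real.sqrt (Bx^2 + By^2 + Bz^2) with hsdef
  have hsne : s ≠ 0 := ne_of_gt hB
  clear_value s
  have hρne : ρ ≠ 0 := ne_of_gt hρ
  have hπ : π ≠ 0 := Real.pi_ne_zero
  simp only [cglA, ← hsdef, Matrix.cons_mulVec, Matrix.cons_dotProduct, Matrix.dotProduct_of_isEmpty,
    Matrix.empty_mulVec, Matrix.smul_cons, Matrix.smul_empty, smul_eq_mul,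
    Matrix.head_cons, Matrix.tail_cons, add_zero, mul_zero, mul_one, zero_add]
  simp only [Matrix.vecCons, Fin.cons_inj, and_true]
  refine ⟨by ring, ?_, ?_, ?_, by ring, by ring, by ring, by ring⟩
  · field_simp
    linear_combination (Bx^2*(8*π*(ppar - pperp) - s^2)) * hs
  · field_simp
    linear_combination (Bx*By*(8*π*(ppar - pperp) - s^2)) * hs
  · field_simp
    linear_combination (Bx*Bz*(8*π*(ppar - pperp) - s^2)) * hs
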